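/- Let β > 1, B₀ > 0, ω ≥ 0 and let g : (0,∞) → ℝ be a measurable function with 0 ≤ g(r) ≤ B₀·(1 + √B₀·r)^{−2β} for all r > 0. Define ψ_k(r) = √(B₀/Γ(k+1))·(B₀/2)^{k/2}·r^k·exp(−B₀r²/4) and λ_k = 2kω·∫₀^∞ ψ_k(r)²·(∫_r^∞ g(s)·s ds)·r^{−1} dr. Then for every integer k with 1 ≤ k ≤ β−1: λ_k ≤ ω·B₀/((β−1)·Γ(k)), where Γ is the Gamma function. -/

import Mathlib

open Real MeasureTheory

/-- Estimate (k-geq-1) from the proof of Theorem 7.3 (thm-power): for a power-decaying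
perturbation `0 ≤ g(r) ≤ B₀(1+√B₀ r)^{−2β}` and `1 ≤ k ≤ β−1`,
`λ_k ≤ ωB₀/((β−1)Γ(k))`. -/
theorem power_decay_lambda_k_small_k
    (β B₀ ω : ℝ) (hβ : 1 < β) (hB₀ : 0 < B₀) (hω : 0 ≤ ω)
    (g : ℝ → ℝ) (hgmeas : Measurable g)
    (hg : ∀ r : ℝ, 0 < r →
      0 ≤ g r ∧ g r ≤ B₀ * (1 + Real.sqrt B₀ * r) ^ (-(2 * β)))
    (ψ : ℕ → ℝ → ℝ)
    (hψ : ∀ (k : ℕ) (r : ℝ), ψ k r = Real.sqrt (B₀ / Real.Gamma ((k : ℝ) + 1))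
        * (B₀ / 2) ^ ((k : ℝ) / 2) * r ^ k * Real.exp (-B₀ * r ^ 2 / 4))
    (lam : ℕ → ℝ)
    (hlam : ∀ k : ℕ, lam k = 2 * k * ω
        * ∫ r in Set.Ioi (0 : ℝ), ψ k r ^ 2 * (∫ s in Set.Ioi r, g s * s) * r⁻¹) :
    ∀ k : ℕ, 1 ≤ k → (k : ℝ) ≤ β - 1 →
      lam k ≤ ω * B₀ / ((β - 1) * Real.Gamma (k : ℝ)) := by
  intro k hk1 hkβ
  have hk0 : (0:ℝ) < (k:ℝ) := by exact_mod_cast hk1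
  have hβ1 : (0:ℝ) < β - 1 := by linarith
  set b := Real.sqrt B₀ with hbdef
  have hb : 0 < b := Real.sqrt_pos.mpr hB₀
  have hb2 : b ^ 2 = B₀ := Real.sq_sqrt hB₀.le
  have hΓk : 0 < Real.Gamma (k:ℝ) := Real.Gamma_pos_of_pos hk0
  have hΓk1 : Real.Gamma ((k:ℝ)+1) = k * Real.Gamma k := Real.Gamma_add_one hk0.ne'
  have hΓ1pos : 0 < Real.Gamma ((k:ℝ)+1) := by rw [hΓk1]; positivity
  set p : ℝ := 2 - 2*β with hp
  have hpneg : p < 0 := by rw [hp]; linarith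
  set F : ℝ → ℝ := fun s => (1+b*s)^p / p with hF
  -- the derivative of the antiderivative
  have hderiv : ∀ x : ℝ, 0 ≤ x → HasDerivAt F (b * (1+b*x)^(p-1)) x := by
    intro x hx
    have h1 : (0:ℝ) < 1 + b*x := by positivity
    have hd : HasDerivAt (fun s : ℝ => 1 + b*s) b x := by
      simpa using ((hasDerivAt_id x).const_mul b).const_add 1
    have hd2 := HasDerivAt.div_const (HasDerivAt.rpow_const (p := p) hd (Or.inl h1.ne')) p
    have e : b * (1+b*x)^(p-1) = b * p * (1+b*x)^(p-1) / p := by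
      rw [eq_div_iff hpneg.ne]
      ring
    rw [e]
    exact hd2
  have htend : Filter.Tendsto F Filter.atTop (nhds 0) := by
    have h1 : Filter.Tendsto (fun s : ℝ => 1 + b*s) Filter.atTop Filter.atTop :=
      Filter.tendsto_atTop_add_const_left _ 1
        (Filter.Tendsto.const_mul_atTop hb Filter.tendsto_id)
    have h2 := (tendsto_rpow_neg_atTop (y := -p) (by linarith)).comp h1
    simp only [neg_neg, Function.comp_def] at h2
    have h3 := h2.div_const p
    simpa using h3
  -- tail integral value and integrability
  have tailint : ∀ r : ℝ, 0 < r →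
      IntegrableOn (fun s : ℝ => b * (1+b*s)^(p-1)) (Set.Ioi r) := by
    intro r hr
    refine integrableOn_Ioi_deriv_of_nonneg' (fun x hx => hderiv x (hr.le.trans hx))
      (fun x hx => ?_) htend
    have hx0 : (0:ℝ) < x := hr.trans hx
    positivity
  have tailval : ∀ r : ℝ, 0 < r →
      (∫ s in Set.Ioi r, b * (1+b*s)^(p-1)) = (1+b*r)^p / (2*(β-1)) := by
    intro r hr
    have h := integral_Ioi_of_hasDerivAt_of_nonneg' (a := r)
      (fun x hx => hderiv x (hr.le.trans hx))
      (fun x hx => by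
        have hx0 : (0:ℝ) < x := hr.trans hx
        positivity) htend
    rw [h, hF]
    have h2 : (2:ℝ) - 2*β ≠ 0 := by linarith
    have h3 : (2:ℝ) * (β-1) ≠ 0 := by positivity
    rw [zero_sub, ← div_neg]
    congr 1
    linarith
  -- bound on g s * s
  have hgs : ∀ s : ℝ, 0 < s → g s * s ≤ b * (1+b*s)^(p-1) := by
    intro s hs
    have h1 : (0:ℝ) < 1 + b*s := by positivity
    have step1 : g s * s ≤ B₀ * (1+b*s)^(-(2*β)) * s :=
      mul_le_mul_of_nonneg_right (hg s hs).2 hs.le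
    refine step1.trans ?_
    have e1 : B₀ * (1+b*s)^(-(2*β)) * s = b * ((b*s) * (1+b*s)^(-(2*β))) := by
      rw [← hb2]; ring
    rw [e1]
    have e2 : b * ((b*s) * (1+b*s)^(-(2*β))) ≤ b * ((1+b*s) * (1+b*s)^(-(2*β))) := by
      have hbs : b*s ≤ 1 + b*s := by linarith
      have hrnn : (0:ℝ) ≤ (1+b*s)^(-(2*β)) := Real.rpow_nonneg h1.le _
      nlinarith [mul_pos hb hs]
    refine e2.trans_eq ?_
    rw [show p - 1 = 1 + -(2*β) by rw [hp]; ring, Real.rpow_add h1, Real.rpow_one]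
  -- integrability of g s * s on tails
  have gsint : ∀ r : ℝ, 0 < r → IntegrableOn (fun s : ℝ => g s * s) (Set.Ioi r) := by
    intro r hr
    refine Integrable.mono' (tailint r hr)
      ((hgmeas.mul measurable_id).aestronglyMeasurable) ?_
    filter_upwards [ae_restrict_mem measurableSet_Ioi] with s hs
    have hs0 : 0 < s := hr.trans hs
    rw [Real.norm_eq_abs, abs_of_nonneg (mul_nonneg (hg s hs0).1 hs0.le)]
    exact hgs s hs0
  -- bounds on G
  have hGnn : ∀ r : ℝ, 0 < r → 0 ≤ ∫ s in Set.Ioi r, g s * s := by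
    intro r hr
    refine setIntegral_nonneg measurableSet_Ioi fun s hs => ?_
    have hs0 : 0 < s := hr.trans hs
    exact mul_nonneg (hg s hs0).1 hs0.le
  have hGle : ∀ r : ℝ, 0 < r →
      (∫ s in Set.Ioi r, g s * s) ≤ (1+b*r)^p / (2*(β-1)) := by
    intro r hr
    rw [← tailval r hr]
    exact setIntegral_mono_on (gsint r hr) (tailint r hr) measurableSet_Ioi
      (fun s hs => hgs s (hr.trans hs))
  -- the constant
  set C : ℝ := B₀ * b / (Real.Gamma ((k:ℝ)+1) * 2^k * (2*(β-1))) with hC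
  have hCnn : 0 ≤ C := by positivity
  -- ψ squared
  have hψsq : ∀ r : ℝ, ψ k r ^ 2 = B₀ / Real.Gamma ((k:ℝ)+1) *
      ((B₀/2)^k * r^(2*k) * Real.exp (-(B₀/2) * r^2)) := by
    intro r
    rw [hψ]
    have hA : (0:ℝ) ≤ B₀ / Real.Gamma ((k:ℝ)+1) := by positivity
    rw [mul_pow, mul_pow, mul_pow, Real.sq_sqrt hA,
      ← Real.rpow_natCast ((B₀/2) ^ ((k:ℝ)/2)) 2,
      ← Real.rpow_mul (by positivity : (0:ℝ) ≤ B₀/2)]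
    have e1 : (k:ℝ)/2 * ((2:ℕ):ℝ) = (k:ℝ) := by push_cast; ring
    rw [e1, Real.rpow_natCast, ← pow_mul, mul_comm k 2]
    have e2 : Real.exp (-B₀ * r^2/4) ^ 2 = Real.exp (-(B₀/2) * r^2) := by
      rw [← Real.exp_nat_mul]
      congr 1
      push_cast
      ring
    rw [e2]
    ring
  -- pointwise key estimate
  have key : ∀ r : ℝ, 0 < r →
      ψ k r ^ 2 * (∫ s in Set.Ioi r, g s * s) * r⁻¹ ≤ C * Real.exp (-(B₀/2) * r^2) := by
    intro r hr
    have h1 : (0:ℝ) < 1 + b*r := by positivity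
    have hE : (0:ℝ) < Real.exp (-(B₀/2) * r^2) := Real.exp_pos _
    set m : ℕ := 2*k - 1 with hm
    have hmk : m + 1 = 2*k := by omega
    have kk : (B₀/2)^k * r^(2*k) * r⁻¹ * (1+b*r)^p ≤ b / 2^k := by
      have e1 : (B₀:ℝ)^k * r^(2*k) * r⁻¹ = b * (b*r)^m := by
        rw [← hb2, ← pow_mul, ← hmk]
        rw [pow_succ' b, pow_succ r, mul_pow]
        field_simp
      have e2 : ((b*r)^m : ℝ) * (1+b*r)^p ≤ 1 := by
        have s1 : ((b*r)^m : ℝ) ≤ (1+b*r)^m := by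
          apply pow_le_pow_left₀ (by positivity)
          linarith [mul_pos hb hr]
        have s2 : ((1+b*r)^m : ℝ) * (1+b*r)^p = (1+b*r)^((m:ℝ)+p) := by
          rw [Real.rpow_add h1, Real.rpow_natCast]
        have s3 : ((1+b*r):ℝ)^((m:ℝ)+p) ≤ 1 := by
          apply Real.rpow_le_one_of_one_le_of_nonpos (by nlinarith [mul_pos hb hr])
          have hmcast : (m:ℝ) = 2*(k:ℝ) - 1 := by
            rw [hm]; push_cast [Nat.cast_sub (by omega : 1 ≤ 2*k)]; ring
          rw [hmcast, hp]; linarith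
        calc ((b*r)^m : ℝ) * (1+b*r)^p ≤ (1+b*r)^m * (1+b*r)^p := by
              apply mul_le_mul_of_nonneg_right s1 (Real.rpow_nonneg h1.le _)
          _ = (1+b*r)^((m:ℝ)+p) := s2
          _ ≤ 1 := s3
      have e3 : (B₀/2)^k * r^(2*k) * r⁻¹ * (1+b*r)^p
          = (b * ((b*r)^m * (1+b*r)^p)) / 2^k := by
        rw [div_pow,
          show B₀^k / 2^k * r^(2*k) * r⁻¹ * (1+b*r)^p
            = (B₀^k * r^(2*k) * r⁻¹) * (1+b*r)^p / 2^k from by ring, e1]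
        ring
      rw [e3]
      rw [div_le_div_iff_of_pos_right (by positivity : (0:ℝ) < 2^k)]
      calc b * ((b*r)^m * (1+b*r)^p) ≤ b * 1 := by
            apply mul_le_mul_of_nonneg_left e2 hb.le
        _ = b := mul_one b
    -- assemble
    have step1 : ψ k r ^ 2 * (∫ s in Set.Ioi r, g s * s) * r⁻¹
        ≤ ψ k r ^ 2 * ((1+b*r)^p / (2*(β-1))) * r⁻¹ := by
      apply mul_le_mul_of_nonneg_right _ (by positivity)
      exact mul_le_mul_of_nonneg_left (hGle r hr) (sq_nonneg _)
    refine step1.trans ?_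
    rw [hψsq r]
    have e4 : B₀ / Real.Gamma ((k:ℝ)+1) * ((B₀/2)^k * r^(2*k) * Real.exp (-(B₀/2)*r^2))
          * ((1+b*r)^p / (2*(β-1))) * r⁻¹
        = (B₀ / Real.Gamma ((k:ℝ)+1) / (2*(β-1)) * Real.exp (-(B₀/2)*r^2))
          * ((B₀/2)^k * r^(2*k) * r⁻¹ * (1+b*r)^p) := by ring
    rw [e4]
    have e5 : C * Real.exp (-(B₀/2) * r^2)
        = (B₀ / Real.Gamma ((k:ℝ)+1) / (2*(β-1)) * Real.exp (-(B₀/2)*r^2)) * (b / 2^k) := by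
      rw [hC]; field_simp
    rw [e5]
    apply mul_le_mul_of_nonneg_left kk (by positivity)
  -- compare integrals
  have hInt : Integrable (fun r : ℝ => C * Real.exp (-(B₀/2) * r^2))
      (volume.restrict (Set.Ioi 0)) :=
    (((integrable_exp_neg_mul_sq (by positivity : (0:ℝ) < B₀/2)).const_mul C)).restrict
  have hI : (∫ r in Set.Ioi (0:ℝ), ψ k r ^ 2 * (∫ s in Set.Ioi r, g s * s) * r⁻¹)
      ≤ ∫ r in Set.Ioi (0:ℝ), C * Real.exp (-(B₀/2) * r^2) := by
    refine integral_mono_of_nonneg ?_ hInt ?_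
    · filter_upwards [ae_restrict_mem measurableSet_Ioi] with r hr
      have hr0 : (0:ℝ) < r := hr
      exact mul_nonneg (mul_nonneg (sq_nonneg _) (hGnn r hr0)) (inv_nonneg.mpr hr0.le)
    · filter_upwards [ae_restrict_mem measurableSet_Ioi] with r hr
      exact key r hr
  -- evaluate the gaussian integral
  have hval : (∫ r in Set.Ioi (0:ℝ), C * Real.exp (-(B₀/2) * r^2))
      = C * (Real.sqrt (π / (B₀/2)) / 2) := by
    rw [integral_const_mul, integral_gaussian_Ioi]
  -- bound the gaussian factor
  have hJ : Real.sqrt (π / (B₀/2)) / 2 ≤ Real.sqrt 2 / b := by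
    have h8 : π / (B₀/2) ≤ 8 / B₀ := by
      rw [div_le_div_iff₀ (by positivity) hB₀]
      nlinarith [Real.pi_le_four]
    have hs8 : Real.sqrt (8 / B₀) = 2 * Real.sqrt 2 / b := by
      rw [Real.sqrt_div (by norm_num : (0:ℝ) ≤ 8) B₀, ← hbdef,
        show (8:ℝ) = 2^2 * 2 by norm_num,
        Real.sqrt_mul (by positivity) 2, Real.sqrt_sq (by norm_num : (0:ℝ) ≤ 2)]
    have := Real.sqrt_le_sqrt h8
    rw [hs8] at this
    calc Real.sqrt (π / (B₀/2)) / 2 ≤ (2 * Real.sqrt 2 / b) / 2 := by linarith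
      _ = Real.sqrt 2 / b := by ring
  -- final assembly
  have h2k : Real.sqrt 2 ≤ (2:ℝ)^k := by
    have h1 : Real.sqrt 2 ≤ 2 := by
      rw [Real.sqrt_le_left (by norm_num : (0:ℝ) ≤ 2)]; norm_num
    calc Real.sqrt 2 ≤ 2 := h1
      _ = (2:ℝ)^1 := (pow_one 2).symm
      _ ≤ (2:ℝ)^k := pow_le_pow_right₀ (by norm_num) hk1
  rw [hlam k]
  calc 2 * (k:ℝ) * ω * ∫ r in Set.Ioi (0:ℝ), ψ k r ^ 2 * (∫ s in Set.Ioi r, g s * s) * r⁻¹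
      ≤ 2 * (k:ℝ) * ω * (C * (Real.sqrt (π / (B₀/2)) / 2)) := by
        apply mul_le_mul_of_nonneg_left (hI.trans_eq hval) (by positivity)
    _ ≤ 2 * (k:ℝ) * ω * (C * (Real.sqrt 2 / b)) := by
        apply mul_le_mul_of_nonneg_left (mul_le_mul_of_nonneg_left hJ hCnn) (by positivity)
    _ = ω * B₀ * (Real.sqrt 2 / 2^k) / ((β - 1) * Real.Gamma (k:ℝ)) := by
        rw [hC, hΓk1, ← hb2]
        field_simp
    _ ≤ ω * B₀ * 1 / ((β - 1) * Real.Gamma (k:ℝ)) := by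
        rw [div_le_div_iff_of_pos_right (by positivity : (0:ℝ) < (β-1) * Real.Gamma (k:ℝ))]
        apply mul_le_mul_of_nonneg_left _ (by positivity)
        rw [div_le_one (by positivity : (0:ℝ) < (2:ℝ)^k)]
        exact h2k
    _ = ω * B₀ / ((β - 1) * Real.Gamma (k:ℝ)) := by rw [mul_one]
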